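/- If there exists a recursively enumerable metric (α,β)-approximation system for f, then f is (α,β)-computable: there is a recursive operator F such that whenever u : ℕ → K satisfies d(α(u(t)), x) < r_t for all t (u is an α-name of x ∈ E), the function F(u) : ℕ → L is total and satisfies e(β(F(u)(n)), f(x)) < r_n for all n (F(u) is a β-name of f(x)). -/

import Mathlib

open Nat.Partrec.Code

namespace Stmt14Aux

def qfun (D : ℕ × ℕ × ℕ × ℕ → ℕ → Bool) (u : ℕ →. ℕ) (n N : ℕ) : Part Bool :=
  (u N.unpair.1).map fun a =>
    D (a, N.unpair.1, N.unpair.2.unpair.1, n) N.unpair.2.unpair.2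

def Fop (D : ℕ × ℕ × ℕ × ℕ → ℕ → Bool) (u : ℕ →. ℕ) (n : ℕ) : Part ℕ :=
  (Nat.rfind (qfun D u n)).map fun N => N.unpair.2.unpair.1

def look (i : ℕ) : List (ℕ × ℕ) → Option ℕ
  | [] => none
  | p :: l => if p.1 = i then some p.2 else look i l

theorem look_mem {i a : ℕ} : ∀ {l : List (ℕ × ℕ)}, look i l = some a → (i, a) ∈ l := by
  intro l
  induction l with
  | nil => simp [look]
  | cons p l ih =>
    intro h
    rw [look] at h
    split at h
    · rcases Option.some.inj h with rfl
      obtain ⟨p1, p2⟩ := p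
      simp_all
    · exact List.mem_cons_of_mem _ (ih h)

theorem look_isSome {i b : ℕ} : ∀ {l : List (ℕ × ℕ)}, (i, b) ∈ l → (look i l).isSome := by
  intro l
  induction l with
  | nil => simp
  | cons p l ih =>
    intro h
    rcases List.mem_cons.1 h with h | h
    · subst h
      simp [look]
    · rw [look]
      split
      · simp
      · exact ih h

theorem look_primrec : Primrec₂ look := by
  refine Primrec₂.of_eq (Primrec.to₂ <| Primrec.list_rec Primrec.snd (Primrec.const none) <|
    Primrec.to₂ <|
      Primrec.ite (Primrec.eq.comp
          (Primrec.fst.comp <| Primrec.fst.comp Primrec.snd)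
          (Primrec.fst.comp Primrec.fst))
        (Primrec.option_some.comp <| Primrec.snd.comp <| Primrec.fst.comp Primrec.snd)
        (Primrec.snd.comp <| Primrec.snd.comp Primrec.snd)) ?_
  intro i l
  induction l with
  | nil => rfl
  | cons p l ih => simp [look, ih]

def funOfList (l : List (ℕ × ℕ)) : ℕ →. ℕ := fun i => Part.ofOption (look i l)

theorem qfun_mono {D} {u v : ℕ →. ℕ} {n N b} (h : ∀ i a, a ∈ v i → a ∈ u i)
    (hb : b ∈ qfun D v n N) : b ∈ qfun D u n N := by
  rcases (Part.mem_map_iff _).1 hb with ⟨a, ha, rfl⟩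
  exact (Part.mem_map_iff _).2 ⟨a, h _ _ ha, rfl⟩

theorem Fop_mono {D} {u v : ℕ →. ℕ} {n m} (h : ∀ i a, a ∈ v i → a ∈ u i)
    (hm : m ∈ Fop D v n) : m ∈ Fop D u n := by
  rcases (Part.mem_map_iff _).1 hm with ⟨N, hN, rfl⟩
  refine (Part.mem_map_iff _).2 ⟨N, ?_, rfl⟩
  have hN := Nat.mem_rfind.1 hN
  refine Nat.mem_rfind.2 ?_
  exact ⟨qfun_mono h hN.1, fun {k} hk => qfun_mono h (hN.2 hk)⟩

theorem funOfList_le {l : List (ℕ × ℕ)} {u : ℕ →. ℕ}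
    (h : ∀ p ∈ l, p.2 ∈ u p.1) : ∀ i a, a ∈ funOfList l i → a ∈ u i := by
  intro i a ha
  rw [funOfList, Part.mem_ofOption, Option.mem_def] at ha
  exact h (i, a) (look_mem ha)

theorem qfun_of_defined {D} {u v : ℕ →. ℕ} {n N b} (h : ∀ i a, a ∈ v i → a ∈ u i)
    (hd : (v N.unpair.1).Dom) (hb : b ∈ qfun D u n N) : b ∈ qfun D v n N := by
  rcases (Part.mem_map_iff _).1 hb with ⟨a, ha, rfl⟩
  have hb' := h _ _ (Part.get_mem hd)
  have hva : (v N.unpair.1).get hd = a := Part.mem_unique hb' ha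
  exact (Part.mem_map_iff _).2 ⟨_, Part.get_mem hd, by rw [hva]⟩

theorem qfun_dom {D} {u : ℕ →. ℕ} {n N b} (hb : b ∈ qfun D u n N) :
    (u N.unpair.1).Dom := by
  rcases (Part.mem_map_iff _).1 hb with ⟨a, ha, -⟩
  exact Part.dom_iff_mem.2 ⟨a, ha⟩

theorem Fop_use {D} {u : ℕ →. ℕ} {n m} (hm : m ∈ Fop D u n) :
    ∃ l : List (ℕ × ℕ), (∀ p ∈ l, p.2 ∈ u p.1) ∧ m ∈ Fop D (funOfList l) n := by
  rcases (Part.mem_map_iff _).1 hm with ⟨N, hN, rfl⟩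
  have hrf := Nat.mem_rfind.1 hN
  have hdom : ∀ N' ≤ N, (u N'.unpair.1).Dom := by
    intro N' hN'
    rcases lt_or_eq_of_le hN' with h | rfl
    · exact qfun_dom (hrf.2 h)
    · exact qfun_dom hrf.1
  refine ⟨(List.range (N + 1)).attach.map fun N' =>
    (N'.1.unpair.1, (u N'.1.unpair.1).get
      (hdom N'.1 (Nat.lt_succ_iff.1 (List.mem_range.1 N'.2)))), ?_, ?_⟩
  · intro p hp
    rcases List.mem_map.1 hp with ⟨N', -, rfl⟩
    exact Part.get_mem _
  · set l := (List.range (N + 1)).attach.map fun N' =>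
      (N'.1.unpair.1, (u N'.1.unpair.1).get
        (hdom N'.1 (Nat.lt_succ_iff.1 (List.mem_range.1 N'.2)))) with hl
    have hle : ∀ i a, a ∈ funOfList l i → a ∈ u i := by
      refine funOfList_le ?_
      intro p hp
      rcases List.mem_map.1 hp with ⟨N', -, rfl⟩
      exact Part.get_mem _
    have hd : ∀ N' ≤ N, (funOfList l N'.unpair.1).Dom := by
      intro N' hN'
      have hmem : (N'.unpair.1, (u N'.unpair.1).get
          (hdom N' hN')) ∈ l := by
        rw [hl]
        exact List.mem_map.2 ⟨⟨N', List.mem_range.2 (Nat.lt_succ_iff.2 hN')⟩,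
          List.mem_attach _ _, rfl⟩
      rw [funOfList]
      rcases Option.isSome_iff_exists.1 (look_isSome hmem) with ⟨b, hb⟩
      simp [hb]
    refine (Part.mem_map_iff _).2 ⟨N, ?_, rfl⟩
    refine Nat.mem_rfind.2 ?_
    exact ⟨qfun_of_defined hle (hd N le_rfl) hrf.1,
      fun {k} hk => qfun_of_defined hle (hd k (le_of_lt hk)) (hrf.2 hk)⟩

theorem Fop_W_partrec {D : ℕ × ℕ × ℕ × ℕ → ℕ → Bool} (hD : Primrec₂ D) :
    Partrec fun t : List (ℕ × ℕ) × ℕ × ℕ =>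
      (Fop D (funOfList t.1) t.2.1).bind fun m =>
        Part.assert (m = t.2.2) fun _ => Part.some () := by
  have hlookup : Computable fun p : (List (ℕ × ℕ) × ℕ × ℕ) × ℕ =>
      look p.2.unpair.1 p.1.1 :=
    (look_primrec.comp (Primrec.fst.comp (Primrec.unpair.comp Primrec.snd))
      (Primrec.fst.comp Primrec.fst)).to_comp
  have hg : Computable₂ fun (p : (List (ℕ × ℕ) × ℕ × ℕ) × ℕ) (a : ℕ) =>
      D (a, p.2.unpair.1, p.2.unpair.2.unpair.1, p.1.2.1) p.2.unpair.2.unpair.2 := by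
    have h1 : Primrec fun q : ((List (ℕ × ℕ) × ℕ × ℕ) × ℕ) × ℕ =>
        ((q.2, q.1.2.unpair.1, q.1.2.unpair.2.unpair.1, q.1.1.2.1) : ℕ × ℕ × ℕ × ℕ) :=
      Primrec.snd.pair
        ((Primrec.fst.comp (Primrec.unpair.comp (Primrec.snd.comp Primrec.fst))).pair
          ((Primrec.fst.comp (Primrec.unpair.comp (Primrec.snd.comp
            (Primrec.unpair.comp (Primrec.snd.comp Primrec.fst))))).pair
            (Primrec.fst.comp (Primrec.snd.comp (Primrec.fst.comp Primrec.fst)))))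
    have h2 : Primrec fun q : ((List (ℕ × ℕ) × ℕ × ℕ) × ℕ) × ℕ =>
        q.1.2.unpair.2.unpair.2 :=
      Primrec.snd.comp (Primrec.unpair.comp (Primrec.snd.comp
        (Primrec.unpair.comp (Primrec.snd.comp Primrec.fst))))
    exact (hD.comp h1 h2).to_comp
  have hq : Partrec₂ fun (t : List (ℕ × ℕ) × ℕ × ℕ) (N : ℕ) =>
      qfun D (funOfList t.1) t.2.1 N := by
    refine (Partrec.map (Computable.ofOption hlookup) hg).of_eq ?_
    intro p
    rfl
  have hFop : Partrec fun t : List (ℕ × ℕ) × ℕ × ℕ => Fop D (funOfList t.1) t.2.1 := by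
    refine Partrec.map (Partrec.rfind hq) ?_
    exact (Primrec.fst.comp (Primrec.unpair.comp (Primrec.snd.comp
      Primrec.unpair))).to_comp.comp₂ Computable.snd.to₂
  refine hFop.bind ?_
  have hif : Computable fun p : (List (ℕ × ℕ) × ℕ × ℕ) × ℕ =>
      (if p.2 = p.1.2.2 then some () else none : Option Unit) :=
    (Primrec.ite (Primrec.eq.comp Primrec.snd
      (Primrec.snd.comp (Primrec.snd.comp Primrec.fst)))
      (Primrec.const (some ())) (Primrec.const none)).to_comp
  refine (Computable.ofOption hif).of_eq ?_
  rintro ⟨t, m⟩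
  by_cases h : m = t.2.2 <;> simp [h, Part.assert_pos, Part.assert_neg]

end Stmt14Aux

/-- A set in a primcodable type is recursively enumerable. -/
def IsRE {α : Type} [Primcodable α] (S : Set α) : Prop :=
  Partrec fun a => Part.assert (a ∈ S) fun _ => Part.some ()

/-- `F` is a recursive operator on partial functions ℕ ⇀ ℕ: its behaviour is
determined, via an r.e. set `W`, by finite parts (lists of pairs) of the graph of the
input function. -/
def IsRecOp (F : (ℕ →. ℕ) → (ℕ →. ℕ)) : Prop :=
  ∃ W : Set (List (ℕ × ℕ) × ℕ × ℕ), IsRE W ∧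
    ∀ (u : ℕ →. ℕ) (n m : ℕ),
      m ∈ F u n ↔ ∃ l : List (ℕ × ℕ), (∀ p ∈ l, p.2 ∈ u p.1) ∧ (l, n, m) ∈ W

/-- `S ⊆ K×ℕ×L×ℕ` is a metric (α,β)-approximation system for `f` on `E`, where
`K = dom α` and `L = dom β` are subsets of ℕ. -/
def MetricApproxOn {X Y : Type*} [MetricSpace X] [MetricSpace Y]
    (K L : Set ℕ) (α : ℕ → X) (β : ℕ → Y) (r : ℕ → ℚ) (E : Set X) (f : X → Y)
    (S : Set (ℕ × ℕ × ℕ × ℕ)) : Prop :=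
  (∀ s ∈ S, s.1 ∈ K ∧ s.2.2.1 ∈ L) ∧
  ∀ x ∈ E,
    (∀ k m l n, (k, m, l, n) ∈ S → dist (α k) x < (r m : ℝ) →
        dist (β l) (f x) < (r n : ℝ)) ∧
    ∀ n : ℕ, ∃ m : ℕ, ∀ k ∈ K, dist (α k) x < (r m : ℝ) →
        ∃ l, (k, m, l, n) ∈ S

/-- an r.e. metric (α,β)-approximation system for f yields
(α,β)-computability of f: some recursive operator transforms every α-name of every
x ∈ E into a β-name of f(x). -/
theorem stmt14 {X Y : Type*} [MetricSpace X] [MetricSpace Y]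
    (K L : Set ℕ) (α : ℕ → X) (β : ℕ → Y)
    (hα : Dense (α '' K)) (hβ : Dense (β '' L))
    (r : ℕ → ℚ) (hrpos : ∀ n, 0 < r n)
    (hracc : ∀ ε : ℝ, 0 < ε → ∃ n, (r n : ℝ) < ε) (hrcomp : Computable r)
    (E : Set X) (f : X → Y) (S : Set (ℕ × ℕ × ℕ × ℕ))
    (hSre : IsRE S) (hS : MetricApproxOn K L α β r E f S) :
    ∃ F : (ℕ →. ℕ) → (ℕ →. ℕ), IsRecOp F ∧
      ∀ x ∈ E, ∀ u : ℕ → ℕ, (∀ t, u t ∈ K ∧ dist (α (u t)) x < (r t : ℝ)) →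
        ∀ n : ℕ, ∃ l : ℕ, F (fun t => Part.some (u t)) n = Part.some l ∧
          l ∈ L ∧ dist (β l) (f x) < (r n : ℝ) := by
  classical
  open Stmt14Aux in
  -- extract a code for the r.e. set `S` and a primitive recursive step-approximation `D`
  obtain ⟨c, hc⟩ := exists_code.1 hSre
  set D : ℕ × ℕ × ℕ × ℕ → ℕ → Bool :=
    fun s k => (evaln k c (Encodable.encode s)).isSome with hDdef
  have hDprim : Primrec₂ D :=
    Primrec.option_isSome.comp
      (primrec_evaln.comp ((Primrec.snd.pair (Primrec.const c)).pair
        (Primrec.encode.comp Primrec.fst)))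
  have hDiff : ∀ s : ℕ × ℕ × ℕ × ℕ, s ∈ S ↔ ∃ k, D s k = true := by
    intro s
    constructor
    · intro hs
      have h1 : Encodable.encode () ∈ eval c (Encodable.encode s) := by
        simp only [hc, Encodable.encodek, Part.coe_some, Part.bind_some,
          Part.assert_pos hs]
        simp
      rcases evaln_complete.1 h1 with ⟨k, hk⟩
      exact ⟨k, by simp [hDdef, Option.isSome_iff_exists, Option.mem_def.1 hk]⟩
    · rintro ⟨k, hk⟩
      rcases Option.isSome_iff_exists.1 hk with ⟨x, hx⟩
      have h1 : x ∈ eval c (Encodable.encode s) := evaln_sound hx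
      simp only [hc, Encodable.encodek, Part.coe_some, Part.bind_some] at h1
      by_contra hs
      rw [Part.assert_neg hs] at h1
      simp at h1
  refine ⟨Fop D, ⟨{t | t.2.2 ∈ Fop D (funOfList t.1) t.2.1}, ?_, ?_⟩, ?_⟩
  · -- the witnessing set W is r.e.
    refine (Fop_W_partrec hDprim).of_eq fun t => ?_
    apply Part.ext
    intro x
    obtain ⟨⟩ := x
    simp only [Part.mem_bind_iff, Part.mem_assert_iff, Part.mem_some_iff,
      Set.mem_setOf_eq, true_and, exists_prop, and_true]
    constructor
    · rintro ⟨m, hm, rfl⟩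
      exact hm
    · intro h
      exact ⟨t.2.2, h, rfl⟩
  · -- the operator is determined by W via finite parts of the graph
    intro u n m
    constructor
    · intro hm
      rcases Fop_use hm with ⟨l, hl, hml⟩
      exact ⟨l, hl, hml⟩
    · rintro ⟨l, hl, hml⟩
      exact Fop_mono (funOfList_le hl) hml
  · -- correctness on names
    intro x hx u hu n
    set v : ℕ →. ℕ := fun t => Part.some (u t) with hv
    obtain ⟨m₀, hm₀⟩ := (hS.2 x hx).2 n
    obtain ⟨l₀, hl₀⟩ := hm₀ (u m₀) (hu m₀).1 (hu m₀).2
    obtain ⟨k₀, hk₀⟩ := (hDiff _).1 hl₀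
    have htrue : true ∈ qfun D v n (Nat.pair m₀ (Nat.pair l₀ k₀)) := by
      refine (Part.mem_map_iff _).2 ⟨u m₀, ?_, ?_⟩
      · simp [hv, Nat.unpair_pair]
      · simp [Nat.unpair_pair, hk₀]
    have hdomall : ∀ N, (qfun D v n N).Dom := by
      intro N
      refine Part.dom_iff_mem.2 ⟨_, (Part.mem_map_iff _).2 ⟨u N.unpair.1, ?_, rfl⟩⟩
      simp [hv]
    have hdom : (Nat.rfind (qfun D v n)).Dom :=
      Nat.rfind_dom.2 ⟨_, htrue, fun {_} _ => hdomall _⟩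
    obtain ⟨N₀, hN₀⟩ := Part.dom_iff_mem.1 hdom
    have htrue₀ := Nat.rfind_spec hN₀
    rcases (Part.mem_map_iff _).1 htrue₀ with ⟨a, ha, hDa⟩
    have hau : a = u N₀.unpair.1 := by
      simpa [hv] using ha
    subst hau
    have hsS : (u N₀.unpair.1, N₀.unpair.1, N₀.unpair.2.unpair.1, n) ∈ S :=
      (hDiff _).2 ⟨_, hDa⟩
    refine ⟨N₀.unpair.2.unpair.1, ?_, (hS.1 _ hsS).2, ?_⟩
    · exact Part.eq_some_iff.2 ((Part.mem_map_iff _).2 ⟨N₀, hN₀, rfl⟩)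
    · exact (hS.2 x hx).1 _ _ _ _ hsS (hu N₀.unpair.1).2
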